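/- In the one-period binomial market, suppose u > γ > d and up + d(1−p) > γ, and fix λ ∈ (0,∞). Then a* := log( p(u − γ) / (−(1−p)(d − γ)) ) / (λ(u − d)) is strictly positive, is the unique maximizer of a ↦ U_λ(G(a)) over a ∈ (0,∞), and satisfies U_λ(G(a*)) > 0. -/

import Mathlib

open MeasureTheory ENNReal Real Filter Set

noncomputable section

variable {Ω : Type*}

/-- Entropic utility `U_l(X) = -(1/l) * log E[exp (-l * X)]`, valued in `EReal`
(so that it takes values in `[-∞, ∞)` when `l > 0`). -/
def entU {mΩ : MeasurableSpace Ω} (P : Measure Ω) (l : ℝ) (X : Ω → ℝ) : EReal :=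
  (- ENNReal.log (∫⁻ ω, ENNReal.ofReal (Real.exp (-l * X ω)) ∂P)) * ((1 / l : ℝ) : EReal)

/-- Gain of the position `a` in the one-period binomial market with proportional
transaction cost `γ`: `G(a) = a * R - γ * |a|`. -/
def binGain (γ : ℝ) (R : Ω → ℝ) (a : ℝ) (ω : Ω) : ℝ :=
  a * R ω - γ * |a|

/-- Auxiliary convexity inequality: `exp` lies above tangent lines. -/
private lemma key_le (p q α β s a : ℝ) (hp : 0 < p) (hq : 0 < q)
    (hid : p * α * Real.exp (-(α * s)) = q * β * Real.exp (β * s)) :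
    p * Real.exp (-(α * s)) + q * Real.exp (β * s)
      ≤ p * Real.exp (-(α * a)) + q * Real.exp (β * a) := by
  have hA := Real.add_one_le_exp (-(α * (a - s)))
  have hB := Real.add_one_le_exp (β * (a - s))
  have eA : Real.exp (-(α * a)) = Real.exp (-(α * s)) * Real.exp (-(α * (a - s))) := by
    rw [← Real.exp_add]; ring_nf
  have eB : Real.exp (β * a) = Real.exp (β * s) * Real.exp (β * (a - s)) := by
    rw [← Real.exp_add]; ring_nf
  have h1 : p * Real.exp (-(α * s)) * (-(α * (a - s)) + 1)
      ≤ p * Real.exp (-(α * s)) * Real.exp (-(α * (a - s))) :=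
    mul_le_mul_of_nonneg_left hA (by positivity)
  have h2 : q * Real.exp (β * s) * (β * (a - s) + 1)
      ≤ q * Real.exp (β * s) * Real.exp (β * (a - s)) :=
    mul_le_mul_of_nonneg_left hB (by positivity)
  have h3 : (a - s) * (p * α * Real.exp (-(α * s))) = (a - s) * (q * β * Real.exp (β * s)) := by
    rw [hid]
  rw [eA, eB]
  nlinarith [h1, h2, h3]

private lemma key_lt (p q α β s a : ℝ) (hp : 0 < p) (hq : 0 < q) (hβ : 0 < β)
    (hid : p * α * Real.exp (-(α * s)) = q * β * Real.exp (β * s)) (hne : a ≠ s) :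
    p * Real.exp (-(α * s)) + q * Real.exp (β * s)
      < p * Real.exp (-(α * a)) + q * Real.exp (β * a) := by
  have hA := Real.add_one_le_exp (-(α * (a - s)))
  have hB := Real.add_one_lt_exp (x := β * (a - s))
    (by intro h; exact hne (by nlinarith [sub_eq_zero.mp (by nlinarith : a - s = 0)]))
  have eA : Real.exp (-(α * a)) = Real.exp (-(α * s)) * Real.exp (-(α * (a - s))) := by
    rw [← Real.exp_add]; ring_nf
  have eB : Real.exp (β * a) = Real.exp (β * s) * Real.exp (β * (a - s)) := by
    rw [← Real.exp_add]; ring_nf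
  have h1 : p * Real.exp (-(α * s)) * (-(α * (a - s)) + 1)
      ≤ p * Real.exp (-(α * s)) * Real.exp (-(α * (a - s))) :=
    mul_le_mul_of_nonneg_left hA (by positivity)
  have h2 : q * Real.exp (β * s) * (β * (a - s) + 1)
      < q * Real.exp (β * s) * Real.exp (β * (a - s)) :=
    mul_lt_mul_of_pos_left hB (by positivity)
  have h3 : (a - s) * (p * α * Real.exp (-(α * s))) = (a - s) * (q * β * Real.exp (β * s)) := by
    rw [hid]
  rw [eA, eB]
  nlinarith [h1, h2, h3]

/-- Computation of the `lintegral` of a nonnegative function of a two-valued random variable. -/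
private lemma lintegral_two_point {mΩ : MeasurableSpace Ω} (P : Measure Ω)
    [IsProbabilityMeasure P] (u d p : ℝ) (hud : u ≠ d) (hp0 : 0 ≤ p) (hp1 : p ≤ 1)
    (R : Ω → ℝ) (hR : Measurable R)
    (hRu : P {ω | R ω = u} = ENNReal.ofReal p)
    (hRd : P {ω | R ω = d} = ENNReal.ofReal (1 - p))
    (f : ℝ → ℝ) (hf : ∀ x, 0 ≤ f x) :
    ∫⁻ ω, ENNReal.ofReal (f (R ω)) ∂P = ENNReal.ofReal (p * f u + (1 - p) * f d) := by
  have hA : MeasurableSet {ω | R ω = u} := hR (measurableSet_singleton u)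
  have hB : MeasurableSet {ω | R ω = d} := hR (measurableSet_singleton d)
  have hdisj : Disjoint {ω | R ω = u} {ω | R ω = d} := by
    rw [Set.disjoint_left]
    intro ω h1 h2
    exact hud (h1.symm.trans h2)
  have hPAB : P ({ω | R ω = u} ∪ {ω | R ω = d}) = 1 := by
    rw [measure_union hdisj hB, hRu, hRd, ← ENNReal.ofReal_add hp0 (by linarith)]
    norm_num
  have hcompl : P ({ω | R ω = u} ∪ {ω | R ω = d})ᶜ = 0 := by
    rw [measure_compl (hA.union hB) (measure_ne_top _ _), hPAB, measure_univ, tsub_self]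
  have hsplit := lintegral_add_compl (fun ω => ENNReal.ofReal (f (R ω)))
    (hA.union hB) (μ := P)
  rw [← hsplit, setLIntegral_measure_zero _ _ hcompl, add_zero,
    lintegral_union hB hdisj]
  have hIA : ∫⁻ ω in {ω | R ω = u}, ENNReal.ofReal (f (R ω)) ∂P
      = ENNReal.ofReal (f u) * ENNReal.ofReal p := by
    rw [setLIntegral_congr_fun hA (fun ω (hω : R ω = u) => by simp only [hω] :
        EqOn (fun ω => ENNReal.ofReal (f (R ω))) (fun _ => ENNReal.ofReal (f u)) {ω | R ω = u}),
      setLIntegral_const, hRu]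
  have hIB : ∫⁻ ω in {ω | R ω = d}, ENNReal.ofReal (f (R ω)) ∂P
      = ENNReal.ofReal (f d) * ENNReal.ofReal (1 - p) := by
    rw [setLIntegral_congr_fun hB (fun ω (hω : R ω = d) => by simp only [hω] :
        EqOn (fun ω => ENNReal.ofReal (f (R ω))) (fun _ => ENNReal.ofReal (f d)) {ω | R ω = d}),
      setLIntegral_const, hRd]
  rw [hIA, hIB, ← ENNReal.ofReal_mul (hf u), ← ENNReal.ofReal_mul (hf d),
    ← ENNReal.ofReal_add (mul_nonneg (hf u) hp0) (mul_nonneg (hf d) (by linarith))]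
  ring_nf

/-- `entU` of a binomial gain, as a real number. -/
private lemma entU_eq {mΩ : MeasurableSpace Ω} (P : Measure Ω)
    [IsProbabilityMeasure P] (u d γ p : ℝ) (hud : u ≠ d) (hp0 : 0 < p) (hp1 : p < 1)
    (R : Ω → ℝ) (hR : Measurable R)
    (hRu : P {ω | R ω = u} = ENNReal.ofReal p)
    (hRd : P {ω | R ω = d} = ENNReal.ofReal (1 - p))
    (l : ℝ) (a : ℝ) :
    entU P l (binGain γ R a)
      = ((-(Real.log (p * Real.exp (-l * (a * u - γ * |a|))
          + (1 - p) * Real.exp (-l * (a * d - γ * |a|)))) * (1 / l) : ℝ) : EReal) := by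
  have hint : ∫⁻ ω, ENNReal.ofReal (Real.exp (-l * binGain γ R a ω)) ∂P
      = ENNReal.ofReal (p * Real.exp (-l * (a * u - γ * |a|))
          + (1 - p) * Real.exp (-l * (a * d - γ * |a|))) := by
    have := lintegral_two_point P u d p hud hp0.le hp1.le R hR hRu hRd
      (fun x => Real.exp (-l * (a * x - γ * |a|))) (fun x => (Real.exp_pos _).le)
    simpa [binGain] using this
  have hpos : 0 < p * Real.exp (-l * (a * u - γ * |a|))
      + (1 - p) * Real.exp (-l * (a * d - γ * |a|)) := by
    have h1p : 0 < 1 - p := by linarith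
    positivity
  rw [entU, hint, ENNReal.log_ofReal_of_pos hpos, ← EReal.coe_neg, ← EReal.coe_mul]

/-- In the one-period binomial market with `u > γ > d` and
`up + d(1-p) > γ`, the point `a* = log(p(u-γ)/(-(1-p)(d-γ)))/(λ(u-d))` is strictly positive,
uniquely maximizes `a ↦ U_λ(G(a))` over `(0,∞)`, and satisfies `U_λ(G(a*)) > 0`. -/
theorem stmt_16
    {mΩ : MeasurableSpace Ω} (P : Measure Ω) [IsProbabilityMeasure P]
    (u d γ p : ℝ) (hud : d < u) (hγ : 0 < γ) (hp0 : 0 < p) (hp1 : p < 1)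
    (R : Ω → ℝ) (hR : Measurable R)
    (hRu : P {ω | R ω = u} = ENNReal.ofReal p)
    (hRd : P {ω | R ω = d} = ENNReal.ofReal (1 - p))
    (l : ℝ) (hl : 0 < l) (hγu : γ < u) (hdγ : d < γ) (hdrift : γ < u * p + d * (1 - p)) :
    let astar : ℝ := Real.log (p * (u - γ) / (-((1 - p) * (d - γ)))) / (l * (u - d))
    0 < astar ∧
      (∀ a : ℝ, 0 < a → entU P l (binGain γ R a) ≤ entU P l (binGain γ R astar)) ∧
      (∀ a : ℝ, 0 < a → a ≠ astar → entU P l (binGain γ R a) < entU P l (binGain γ R astar)) ∧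
      0 < entU P l (binGain γ R astar) := by
  intro astar
  set q : ℝ := 1 - p with hqdef
  have hq : 0 < q := by simp [hqdef]; linarith
  set α : ℝ := l * (u - γ) with hαdef
  set β : ℝ := l * (γ - d) with hβdef
  have hα : 0 < α := by apply mul_pos hl; linarith
  have hβ : 0 < β := by apply mul_pos hl; linarith
  set c : ℝ := p * (u - γ) / (-((1 - p) * (d - γ))) with hcdef
  have hc1 : 1 < c := by
    rw [hcdef]
    rw [one_lt_div (by nlinarith)]
    nlinarith
  have hc0 : 0 < c := by linarith
  have hastar : 0 < astar := by
    apply div_pos (Real.log_pos hc1) (by nlinarith)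
  -- the first-order condition
  have hsum : α + β = l * (u - d) := by rw [hαdef, hβdef]; ring
  have hexp : Real.exp ((α + β) * astar) = c := by
    have hne0 : l * (u - d) ≠ 0 := ne_of_gt (mul_pos hl (sub_pos.mpr hud))
    have hastar_eq : astar = Real.log c / (l * (u - d)) := rfl
    have : (α + β) * astar = Real.log c := by
      rw [hsum, hastar_eq]
      field_simp
      exact mul_div_cancel_left₀ _ (sub_ne_zero.mpr hud.ne')
    rw [this, Real.exp_log hc0]
  have hid : p * α * Real.exp (-(α * astar)) = q * β * Real.exp (β * astar) := by
    have hEβ : Real.exp (β * astar) = Real.exp ((α + β) * astar) * Real.exp (-(α * astar)) := by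
      rw [← Real.exp_add]; ring_nf
    rw [hEβ, hexp]
    have hden2 : -((1 - p) * (d - γ)) = q * (γ - d) := by rw [hqdef]; ring
    have hqγd : q * (γ - d) ≠ 0 := ne_of_gt (mul_pos hq (by linarith))
    have hcc : c * (q * (γ - d)) = p * (u - γ) := by
      rw [hcdef, hden2]; exact div_mul_cancel₀ _ hqγd
    have hqbc : q * β * c = p * α := by
      rw [hαdef, hβdef]; linear_combination l * hcc
    calc p * α * Real.exp (-(α * astar)) = (q * β * c) * Real.exp (-(α * astar)) := by rw [hqbc]
      _ = q * β * (c * Real.exp (-(α * astar))) := by ring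
  -- the real value function  F(a) = p e^{-αa} + q e^{βa}  for a ≥ 0
  have hFform : ∀ a : ℝ, 0 ≤ a →
      entU P l (binGain γ R a)
        = ((-(Real.log (p * Real.exp (-(α * a)) + q * Real.exp (β * a))) * (1 / l) : ℝ) : EReal) := by
    intro a ha
    rw [entU_eq P u d γ p (by linarith) hp0 hp1 R hR hRu hRd l a, abs_of_nonneg ha]
    have e1 : -l * (a * u - γ * a) = -(α * a) := by rw [hαdef]; ring
    have e2 : -l * (a * d - γ * a) = β * a := by rw [hβdef]; ring
    rw [e1, e2, ← hqdef]
  set F : ℝ → ℝ := fun a => p * Real.exp (-(α * a)) + q * Real.exp (β * a) with hFdef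
  have hFpos : ∀ a, 0 < F a := fun a => by positivity
  have hFle : ∀ a, F astar ≤ F a := fun a => key_le p q α β astar a hp0 hq hid
  have hFlt : ∀ a, a ≠ astar → F astar < F a := fun a ha =>
    key_lt p q α β astar a hp0 hq hβ hid ha
  have hF1 : F astar < 1 := by
    have := hFlt 0 (by linarith)
    simpa [hFdef, hqdef] using this
  refine ⟨hastar, ?_, ?_, ?_⟩
  · intro a ha
    rw [hFform a ha.le, hFform astar hastar.le, EReal.coe_le_coe_iff]
    have hlog : Real.log (F astar) ≤ Real.log (F a) :=
      Real.log_le_log (hFpos astar) (hFle a)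
    have h1l : (0:ℝ) < 1 / l := by positivity
    nlinarith
  · intro a ha hne
    rw [hFform a ha.le, hFform astar hastar.le, EReal.coe_lt_coe_iff]
    have hlog : Real.log (F astar) < Real.log (F a) :=
      Real.log_lt_log (hFpos astar) (hFlt a hne)
    have h1l : (0:ℝ) < 1 / l := by positivity
    nlinarith
  · rw [hFform astar hastar.le]
    rw [show ((0:EReal) = ((0:ℝ):EReal)) from rfl, EReal.coe_lt_coe_iff]
    have hlog : Real.log (F astar) < 0 := Real.log_neg (hFpos astar) hF1
    have h1l : (0:ℝ) < 1 / l := by positivity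
    nlinarith
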